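/- Let K be a linearly ordered compact space and let d : K × K → [0,∞) be a symmetric map with d(x,y) > 0 whenever x ≠ y. Assume that for every ε > 0 and every pair x < y in K with the open interval (x,y) nonempty, there exist u < v in K with the closed interval [u,v] contained in (x,y), the open interval (u,v) nonempty, and sup{d(s,t) : s,t ∈ (u,v)} < ε. Then K is almost totally disconnected. -/

import Mathlib

universe u

open Set Topology

/-- A quasi metric: symmetric, nonnegative, vanishing exactly on the diagonal
(the triangle inequality may fail). -/
def IsQuasiMetric {K : Type u} (d : K → K → ℝ) : Prop :=
  (∀ x y, 0 ≤ d x y) ∧ (∀ x y, d x y = d y x) ∧ (∀ x y, d x y = 0 ↔ x = y)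

/-- `d` fragments `K`: every nonempty closed set has a relatively open nonempty
subset of `d`-diameter less than any prescribed `ε > 0`. -/
def Fragments {K : Type u} [TopologicalSpace K] (d : K → K → ℝ) : Prop :=
  ∀ L : Set K, L.Nonempty → IsClosed L → ∀ ε : ℝ, 0 < ε →
    ∃ U : Set K, IsOpen U ∧ (U ∩ L).Nonempty ∧
      ∀ x ∈ U ∩ L, ∀ y ∈ U ∩ L, d x y < ε

/-- `K` is almost totally disconnected: it embeds into `[0,1]^Γ` so that every
point has all but countably many coordinates in `{0,1}`. -/
def AlmostTotallyDisconnected (K : Type u) [TopologicalSpace K] : Prop :=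
  ∃ (Γ : Type u) (f : K → Γ → ℝ),
    Topology.IsEmbedding f ∧
    (∀ x γ, f x γ ∈ Set.Icc (0:ℝ) 1) ∧
    (∀ x : K, {γ : Γ | f x γ ∉ ({0, 1} : Set ℝ)}.Countable)

/-- If every nonempty open interval of a linearly ordered compact space contains an
open subinterval (with closure inside it) of arbitrarily small `d`-diameter, for a
symmetric `d` positive off the diagonal, then the space is almost totally disconnected. -/
theorem almost_totally_disconnected_of_interval_fragmentation
    {K : Type u} [LinearOrder K] [TopologicalSpace K] [OrderTopology K] [CompactSpace K]
    (d : K → K → ℝ)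
    (hnonneg : ∀ x y, 0 ≤ d x y)
    (hsymm : ∀ x y, d x y = d y x)
    (hpos : ∀ x y : K, x ≠ y → 0 < d x y)
    (hfrag : ∀ ε : ℝ, 0 < ε → ∀ x y : K, x < y → (Set.Ioo x y).Nonempty →
      ∃ u v : K, u < v ∧ Set.Icc u v ⊆ Set.Ioo x y ∧ (Set.Ioo u v).Nonempty ∧
        ∃ c : ℝ, c < ε ∧ ∀ s ∈ Set.Ioo u v, ∀ t ∈ Set.Ioo u v, d s t ≤ c) :
    AlmostTotallyDisconnected K := by
  classical
  -- Urysohn functions attached to each pair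
  have urysohn : ∀ p : K × K, ∃ g : K → ℝ, Continuous g ∧ (∀ x, g x ∈ Icc (0:ℝ) 1) ∧
      (p.1 < p.2 → (∀ x, x ≤ p.1 → g x = 0) ∧ (∀ x, p.2 ≤ x → g x = 1)) := by
    intro p
    by_cases h : p.1 < p.2
    · have hd : Disjoint (Iic p.1) (Ici p.2) := by
        rw [Set.disjoint_left]
        intro x hx hx'
        exact absurd (lt_of_lt_of_le h hx') (not_lt.2 hx)
      obtain ⟨g, hg0, hg1, hgI⟩ := exists_continuous_zero_one_of_isClosed
        (isClosed_Iic (a := p.1)) (isClosed_Ici (a := p.2)) hd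
      refine ⟨g, g.continuous, hgI, fun _ => ⟨fun x hx => ?_, fun x hx => ?_⟩⟩
      · simpa using hg0 hx
      · simpa using hg1 hx
    · exact ⟨fun _ => 0, continuous_const, fun x => ⟨le_refl 0, zero_le_one⟩,
        fun h' => absurd h' h⟩
  choose g hgc hgI hgsep using urysohn
  -- good pairs at scale n
  set good : ℕ → Set (K × K) := fun n =>
    {p | p.1 < p.2 ∧ (Ioo p.1 p.2).Nonempty ∧
      ∃ c, c < 1/(n+1 : ℝ) ∧ ∀ s ∈ Ioo p.1 p.2, ∀ t ∈ Ioo p.1 p.2, d s t ≤ c} with hgood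
  set Fam : ℕ → Set (Set (K × K)) := fun n =>
    {S | S ⊆ good n ∧
      S.Pairwise (fun p q => Disjoint (Ioo p.1 p.2) (Ioo q.1 q.2))} with hFam
  have zorn : ∀ n, ∃ B, Maximal (· ∈ Fam n) B := by
    intro n
    apply zorn_subset
    intro c hc hchain
    refine ⟨⋃₀ c, ⟨sUnion_subset fun s hs => (hc hs).1, ?_⟩,
      fun s hs => subset_sUnion_of_mem hs⟩
    intro p hp q hq hpq
    obtain ⟨s, hs, hps⟩ := hp
    obtain ⟨t, ht, hqt⟩ := hq
    rcases hchain.total hs ht with h | h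
    · exact (hc ht).2 (h hps) hqt hpq
    · exact (hc hs).2 hps (h hqt) hpq
  choose B hB using zorn
  have hBsub : ∀ n, B n ⊆ good n := fun n => (hB n).1.1
  have hBpair : ∀ n, (B n).Pairwise (fun p q => Disjoint (Ioo p.1 p.2) (Ioo q.1 q.2)) :=
    fun n => (hB n).1.2
  -- the coordinate functions
  set F : K → ((K × K) ⊕ (ULift.{u} ℕ × K × K)) → ℝ := fun x γ => Sum.elim
      (fun p => if p.1 < p.2 ∧ Ioo p.1 p.2 = ∅ then g p x else 0)
      (fun np => if np.2 ∈ B np.1.down then g np.2 x else 0) γ with hF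
  have hsymrel : Symmetric (fun p q : K × K => Disjoint (Ioo p.1 p.2) (Ioo q.1 q.2)) :=
    fun p q h => h.symm
  -- key separation property
  have key : ∀ a b : K, a < b → ∃ γ, F a γ = 0 ∧ F b γ = 1 := by
    intro a b hab
    by_cases hj : ∃ p q : K, a ≤ p ∧ p < q ∧ q ≤ b ∧ Ioo p q = ∅
    · obtain ⟨p, q, hap, hpq, hqb, he⟩ := hj
      refine ⟨Sum.inl (p, q), ?_, ?_⟩
      · simp only [hF, Sum.elim_inl, if_pos (⟨hpq, he⟩ : p < q ∧ Ioo p q = ∅)]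
        exact (hgsep (p, q) hpq).1 a hap
      · simp only [hF, Sum.elim_inl, if_pos (⟨hpq, he⟩ : p < q ∧ Ioo p q = ∅)]
        exact (hgsep (p, q) hpq).2 b hqb
    · push_neg at hj
      -- every subinterval of [a,b] is nonempty
      have hdense : ∀ p q : K, a ≤ p → p < q → q ≤ b → (Ioo p q).Nonempty := by
        intro p q h1 h2 h3
        exact hj p q h1 h2 h3
      obtain ⟨w, hw⟩ := hdense a b le_rfl hab le_rfl
      obtain ⟨x1, hx1⟩ := hdense a w le_rfl hw.1 (le_of_lt hw.2)
      obtain ⟨x2, hx2⟩ := hdense x1 w (le_of_lt hx1.1) hx1.2 (le_of_lt hw.2)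
      obtain ⟨x3, hx3⟩ := hdense x2 w (le_of_lt (lt_trans hx1.1 hx2.1)) hx2.2
        (le_of_lt hw.2)
      -- a < x1 < x2 < x3 < w < b
      have hax1 : a < x1 := hx1.1
      have hx1x2 : x1 < x2 := hx2.1
      have hx2x3 : x2 < x3 := hx3.1
      have hx3w : x3 < w := hx3.2
      have hwb : w < b := hw.2
      have hδ : (0:ℝ) < min (d x1 x2) (d x3 w) :=
        lt_min (hpos _ _ (ne_of_lt hx1x2)) (hpos _ _ (ne_of_lt hx3w))
      obtain ⟨n, hn⟩ := exists_nat_one_div_lt hδ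
      have hIoo23 : (Ioo x2 x3).Nonempty :=
        hdense x2 x3 (le_of_lt (lt_trans hax1 hx1x2)) hx2x3
          (le_of_lt (lt_trans hx3w hwb))
      have hεpos : (0:ℝ) < 1/(n+1 : ℝ) := by positivity
      obtain ⟨u, v, huv, hIcc, hne, c, hc, hcd⟩ := hfrag _ hεpos x2 x3 hx2x3 hIoo23
      have huvgood : (u, v) ∈ good n := ⟨huv, hne, c, hc, hcd⟩
      have hu23 : u ∈ Ioo x2 x3 := hIcc ⟨le_rfl, le_of_lt huv⟩
      have hv23 : v ∈ Ioo x2 x3 := hIcc ⟨le_of_lt huv, le_rfl⟩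
      -- a good coordinate separating a and b
      have sep : ∃ q ∈ B n, a < q.1 ∧ q.2 ≤ b := by
        by_cases hm : (u, v) ∈ B n
        · exact ⟨(u, v), hm, lt_trans (lt_trans hax1 hx1x2) hu23.1,
            le_of_lt (lt_trans (lt_trans hv23.2 hx3w) hwb)⟩
        · -- maximality gives an overlapping member
          have hins : insert (u, v) (B n) ∉ Fam n := by
            intro hmem
            exact hm (((hB n).2 hmem (subset_insert _ _)) (mem_insert _ _))
          have hover : ∃ q ∈ B n, ¬ Disjoint (Ioo u v) (Ioo q.1 q.2) := by
            by_contra hno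
            push_neg at hno
            refine hins ⟨insert_subset huvgood (hBsub n), ?_⟩
            haveI : Std.Symm (fun p q : K × K => Disjoint (Ioo p.1 p.2) (Ioo q.1 q.2)) := ⟨hsymrel⟩
            rw [Set.pairwise_insert_of_symm]
            exact ⟨hBpair n, fun q hq _ => hno q hq⟩
          obtain ⟨q, hqB, hnd⟩ := hover
          obtain ⟨w', hw'uv, hw'q⟩ := Set.not_disjoint_iff.1 hnd
          have hq1q2 : q.1 < q.2 := (hBsub n hqB).1
          obtain ⟨c', hc', hcd'⟩ := (hBsub n hqB).2.2
          have hw'23 : w' ∈ Ioo x2 x3 := hIcc ⟨le_of_lt hw'uv.1, le_of_lt hw'uv.2⟩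
          by_cases h1 : a < q.1
          · by_cases h2 : q.2 ≤ b
            · exact ⟨q, hqB, h1, h2⟩
            · -- q.2 > b : then x3 and w lie in (q.1, q.2), contradicting d x3 w
              push_neg at h2
              have hx3m : x3 ∈ Ioo q.1 q.2 :=
                ⟨lt_trans hw'q.1 hw'23.2, lt_trans (lt_trans hx3w hwb) h2⟩
              have hwm : w ∈ Ioo q.1 q.2 :=
                ⟨lt_trans hx3m.1 hx3w, lt_trans hwb h2⟩
              have := hcd' x3 hx3m w hwm
              have h3 : d x3 w < min (d x1 x2) (d x3 w) :=
                lt_of_le_of_lt this (lt_trans hc' hn)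
              exact absurd h3 (not_lt.2 (min_le_right _ _))
          · -- q.1 ≤ a : then x1 and x2 lie in (q.1, q.2), contradicting d x1 x2
            push_neg at h1
            have hx2m : x2 ∈ Ioo q.1 q.2 :=
              ⟨lt_of_le_of_lt h1 (lt_trans hax1 hx1x2), lt_trans hw'23.1 hw'q.2⟩
            have hx1m : x1 ∈ Ioo q.1 q.2 :=
              ⟨lt_of_le_of_lt h1 hax1, lt_trans hx1x2 hx2m.2⟩
            have := hcd' x1 hx1m x2 hx2m
            have h3 : d x1 x2 < min (d x1 x2) (d x3 w) :=
              lt_of_le_of_lt this (lt_trans hc' hn)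
            exact absurd h3 (not_lt.2 (min_le_left _ _))
      obtain ⟨q, hqB, haq, hqb⟩ := sep
      have hq1q2 : q.1 < q.2 := (hBsub n hqB).1
      refine ⟨Sum.inr (ULift.up n, q), ?_, ?_⟩
      · simp only [hF, Sum.elim_inr, if_pos hqB]
        exact (hgsep q hq1q2).1 a (le_of_lt haq)
      · simp only [hF, Sum.elim_inr, if_pos hqB]
        exact (hgsep q hq1q2).2 b hqb
  refine ⟨(K × K) ⊕ (ULift.{u} ℕ × K × K), F, ?_, ?_, ?_⟩
  · -- embedding
    have hcont : Continuous F := by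
      apply continuous_pi
      rintro (p | np)
      · by_cases h : p.1 < p.2 ∧ Ioo p.1 p.2 = ∅
        · simp only [hF, Sum.elim_inl, h, if_true]
          exact hgc p
        · simp only [hF, Sum.elim_inl, h, if_false]
          exact continuous_const
      · by_cases h : np.2 ∈ B np.1.down
        · simp only [hF, Sum.elim_inr, h, if_true]
          exact hgc np.2
        · simp only [hF, Sum.elim_inr, h, if_false]
          exact continuous_const
    have hinj : Function.Injective F := by
      intro s t hst
      by_contra hne
      rcases lt_trichotomy s t with h | h | h
      · obtain ⟨γ, h0, h1⟩ := key s t h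
        rw [hst] at h0
        rw [h0] at h1
        exact zero_ne_one h1
      · exact hne h
      · obtain ⟨γ, h0, h1⟩ := key t s h
        rw [← hst] at h0
        rw [h0] at h1
        exact zero_ne_one h1
    exact (hcont.isClosedEmbedding hinj).isEmbedding
  · -- values in [0,1]
    rintro x (p | np)
    · simp only [hF, Sum.elim_inl]
      split_ifs with h
      · exact hgI p x
      · exact ⟨le_rfl, zero_le_one⟩
    · simp only [hF, Sum.elim_inr]
      split_ifs with h
      · exact hgI np.2 x
      · exact ⟨le_rfl, zero_le_one⟩
  · -- countably many non-extreme coordinates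
    intro x
    have struct : ∀ γ, F x γ ∉ ({0, 1} : Set ℝ) →
        ∃ np : ULift.{u} ℕ × K × K, γ = Sum.inr np ∧ np.2 ∈ B np.1.down ∧
          x ∈ Ioo np.2.1 np.2.2 := by
      rintro (p | np) hγ
      · exfalso
        simp only [hF, Sum.elim_inl] at hγ
        split_ifs at hγ with h
        · -- g p x ∉ {0,1} with Ioo p.1 p.2 = ∅ : impossible
          have hx1 : ¬ x ≤ p.1 := fun hx => hγ (by
            rw [(hgsep p h.1).1 x hx]; exact Or.inl rfl)
          have hx2 : ¬ p.2 ≤ x := fun hx => hγ (by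
            rw [(hgsep p h.1).2 x hx]; exact Or.inr rfl)
          have : x ∈ Ioo p.1 p.2 := ⟨not_le.1 hx1, not_le.1 hx2⟩
          rw [h.2] at this
          exact this
        · exact hγ (Or.inl rfl)
      · simp only [hF, Sum.elim_inr] at hγ
        split_ifs at hγ with h
        · have hlt : np.2.1 < np.2.2 := (hBsub np.1.down h).1
          have hx1 : ¬ x ≤ np.2.1 := fun hx => hγ (by
            rw [(hgsep np.2 hlt).1 x hx]; exact Or.inl rfl)
          have hx2 : ¬ np.2.2 ≤ x := fun hx => hγ (by
            rw [(hgsep np.2 hlt).2 x hx]; exact Or.inr rfl)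
          exact ⟨np, rfl, h, not_le.1 hx1, not_le.1 hx2⟩
        · exact absurd (Or.inl rfl) hγ
    rw [Set.countable_iff_exists_injective]
    choose np hnpeq hnpB hnpx using fun γ : {γ // F x γ ∉ ({0, 1} : Set ℝ)} =>
      struct γ.1 γ.2
    refine ⟨fun γ => (np γ).1.down, fun γ1 γ2 hn => ?_⟩
    have h1 : (np γ1).1 = (np γ2).1 := ULift.ext _ _ hn
    have h2 : (np γ1).2 = (np γ2).2 := by
      by_contra hne
      have hm2 : (np γ2).2 ∈ B (np γ1).1.down := by rw [h1]; exact hnpB γ2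
      have hd := hBpair ((np γ1).1.down) (hnpB γ1) hm2 hne
      exact Set.disjoint_left.1 hd (hnpx γ1) (hnpx γ2)
    apply Subtype.ext
    rw [hnpeq γ1, hnpeq γ2, Prod.ext h1 h2]
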